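/- Let t be an odd natural number with t ≥ 1, and let s be a natural number with s ≥ t. Then s can be written as a sum of at most two natural numbers each coprime to t; that is, either gcd(s, t) = 1, or there exist positive natural numbers a, b with a + b = s, gcd(a, t) = 1, and gcd(b, t) = 1. -/

import Mathlib

theorem sum_of_at_most_two_coprime (t s : ℕ) (ht : Odd t) (ht1 : 1 ≤ t)
    (hs : t ≤ s) :
    Nat.gcd s t = 1 ∨
      ∃ a b : ℕ, 0 < a ∧ 0 < b ∧ a + b = s ∧
        Nat.gcd a t = 1 ∧ Nat.gcd b t = 1 := by
  by_cases hst : Nat.gcd s t = 1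
  · exact Or.inl hst
  right
  have ht2 : 1 < t := by
    rcases Nat.lt_or_ge 1 t with h | h
    · exact h
    · exfalso; apply hst
      have : t = 1 := by omega
      simp [this]
  set g := Nat.gcd t (s ^ t) with hg
  set c := t / g with hc
  have hgdvd : g ∣ t := Nat.gcd_dvd_left _ _
  have hcg : c * g = t := Nat.div_mul_cancel hgdvd
  -- (i) : primes dividing t and s don't divide c
  have hi : ∀ p : ℕ, p.Prime → p ∣ t → p ∣ s → ¬ p ∣ c := by
    intro p pp hpt hps hpc
    set k := t.factorization p with hk
    have hkt : k < t := Nat.factorization_lt p (by omega)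
    have hpk : p ^ k ∣ s ^ t :=
      dvd_trans (pow_dvd_pow_of_dvd hps k) (pow_dvd_pow s hkt.le)
    have hpkt : p ^ k ∣ t := Nat.ordProj_dvd t p
    have hpkg : p ^ k ∣ g := Nat.dvd_gcd hpkt hpk
    have hdvd : p ^ (k + 1) ∣ t := by
      obtain ⟨c', hc'⟩ := hpc
      obtain ⟨g', hg'⟩ := hpkg
      refine ⟨c' * g', ?_⟩
      rw [← hcg, hc', hg']; ring
    have := (Nat.Prime.pow_dvd_iff_le_factorization pp (by omega)).mp hdvd
    omega
  -- (ii) : primes dividing t but not s divide c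
  have hii : ∀ p : ℕ, p.Prime → p ∣ t → ¬ p ∣ s → p ∣ c := by
    intro p pp hpt hps
    have hpg : ¬ p ∣ g := fun h =>
      hps (pp.dvd_of_dvd_pow (h.trans (Nat.gcd_dvd_right _ _)))
    rcases (Nat.Prime.dvd_mul pp).mp (hcg ▸ hpt) with h | h
    · exact h
    · exact absurd h hpg
  -- key : no prime divisor of t divides s + c
  have hkey : ∀ p : ℕ, p.Prime → p ∣ t → ¬ p ∣ (s + c) := by
    intro p pp hpt hpsc
    by_cases hps : p ∣ s
    · exact hi p pp hpt hps ((Nat.dvd_add_right hps).mp hpsc)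
    · exact hps ((Nat.dvd_add_right (hii p pp hpt hps)).mp
        (by rwa [Nat.add_comm] at hpsc))
  -- inverse of 2 mod t
  have h2t : Nat.Coprime 2 t := Nat.coprime_two_left.mpr ht
  obtain ⟨i, -, hi2⟩ := Nat.exists_mul_mod_eq_one_of_coprime h2t ht2
  set a := (s + c) * i % t with ha
  have halt : a < t := Nat.mod_lt _ (by omega)
  have hmod : 2 * a ≡ s + c [MOD t] := by
    calc 2 * a ≡ 2 * ((s + c) * i) [MOD t] :=
          Nat.ModEq.mul_left 2 (Nat.mod_modEq _ t)
      _ = (s + c) * (2 * i) := by ring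
      _ ≡ (s + c) * 1 [MOD t] := by
          refine Nat.ModEq.mul_left _ ?_
          show 2 * i % t = 1 % t
          rw [hi2, Nat.mod_eq_of_lt ht2]
      _ = s + c := by ring
  -- Claim A
  have hA : ∀ p : ℕ, p.Prime → p ∣ t → p ∣ a → False := by
    intro p pp hpt hpa
    apply hkey p pp hpt
    have hmodp : 2 * a ≡ s + c [MOD p] := hmod.of_dvd hpt
    have h0 : 2 * a ≡ 0 [MOD p] :=
      (Nat.modEq_zero_iff_dvd).mpr (hpa.mul_left 2)
    have : (s + c) ≡ 0 [MOD p] := hmodp.symm.trans h0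
    exact (Nat.modEq_zero_iff_dvd).mp this
  have hane : a ≠ 0 := by
    intro h0
    exact hA t.minFac (Nat.minFac_prime (by omega)) (Nat.minFac_dvd t)
      (h0 ▸ dvd_zero _)
  have has : a < s := lt_of_lt_of_le halt hs
  refine ⟨a, s - a, by omega, by omega, by omega, ?_, ?_⟩
  · by_contra hcon
    obtain ⟨p, pp, hpa, hpt⟩ := Nat.Prime.not_coprime_iff_dvd.mp hcon
    exact hA p pp hpt hpa
  · by_contra hcon
    obtain ⟨p, pp, hpb, hpt⟩ := Nat.Prime.not_coprime_iff_dvd.mp hcon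
    -- work in ℤ
    have hmodp : ((2 * a : ℕ) : ℤ) ≡ ((s + c : ℕ) : ℤ) [ZMOD (p : ℕ)] :=
      Int.natCast_modEq_iff.mpr (hmod.of_dvd hpt)
    have hpbz : (p : ℤ) ∣ ((s : ℤ) - a) := by
      have : ((s - a : ℕ) : ℤ) = (s : ℤ) - a := by
        push_cast [Nat.cast_sub has.le]; ring
      exact this ▸ Int.natCast_dvd_natCast.mpr hpb
    have hsc : (p : ℤ) ∣ ((s : ℤ) - c) := by
      have h1 : (p : ℤ) ∣ (2 * (a : ℤ) - ((s : ℤ) + c)) := by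
        have h := Int.ModEq.dvd hmodp.symm
        convert h using 1
        push_cast; ring
      have h2 : (p : ℤ) ∣ 2 * ((s : ℤ) - a) := hpbz.mul_left 2
      have : (s : ℤ) - c = 2 * ((s : ℤ) - a) + (2 * a - (s + c)) := by
        ring
      rw [this]; exact dvd_add h2 h1
    by_cases hps : p ∣ s
    · apply hi p pp hpt hps
      have : (p : ℤ) ∣ (c : ℤ) := by
        have hsz : (p : ℤ) ∣ (s : ℤ) := Int.natCast_dvd_natCast.mpr hps
        have : (c : ℤ) = (s : ℤ) - ((s : ℤ) - c) := by ring
        rw [this]; exact dvd_sub hsz hsc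
      exact_mod_cast Int.natCast_dvd_natCast.mp (by exact_mod_cast this)
    · apply hps
      have hpc : p ∣ c := hii p pp hpt hps
      have : (p : ℤ) ∣ (s : ℤ) := by
        have hcz : (p : ℤ) ∣ (c : ℤ) := Int.natCast_dvd_natCast.mpr hpc
        have : (s : ℤ) = ((s : ℤ) - c) + c := by ring
        rw [this]; exact dvd_add hsc hcz
      exact_mod_cast Int.natCast_dvd_natCast.mp (by exact_mod_cast this)
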